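/- For every α in the relational model D, the interpretation of the associated closed term α⁺ is exactly the singleton {α}, and the interpretation of the test context α⁻[x] (with free variable x) is the singleton {[α]}. -/

import Mathlib

/-- Terms of the `∂₀λ`-calculus with tests; a test is a (multiset, represented as a)
list of terms, and `taubar V` is the term `τ̄(V)`. -/
inductive Tm : Type
  | var : ℕ → Tm
  | lam : ℕ → Tm → Tm
  | app : Tm → List Tm → Tm
  | taubar : List Tm → Tm

variable {D : Type*}

mutual
/-- Relational interpretation of terms in the reflexive object `D ≅ Multiset D × D`
(`star` is the element `* = ([],[],…)`), with environments `ρ : ℕ → Multiset D`. -/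
def interp (e : D ≃ Multiset D × D) (star : D) : Tm → Set ((ℕ → Multiset D) × D)
  | .var y => {p | p.1 y = {p.2} ∧ ∀ z : ℕ, z ≠ y → p.1 z = 0}
  | .lam y M => {p | ∃ (b : Multiset D) (α : D), p.2 = e.symm (b, α) ∧ p.1 y = 0 ∧
      (Function.update p.1 y b, α) ∈ interp e star M}
  | .app M P => {p | ∃ (ρ₁ ρ₂ : ℕ → Multiset D) (b : Multiset D), p.1 = ρ₁ + ρ₂ ∧
      (ρ₁, e.symm (b, p.2)) ∈ interp e star M ∧ (ρ₂, b) ∈ interpBag e star P}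
  | .taubar V => {p | p.2 = star ∧ p.1 ∈ interpTest e star V}
/-- Relational interpretation of bags. -/
def interpBag (e : D ≃ Multiset D × D) (star : D) :
    List Tm → Set ((ℕ → Multiset D) × Multiset D)
  | [] => {p | p.1 = 0 ∧ p.2 = 0}
  | L :: P => {p | ∃ (ρ₁ ρ₂ : ℕ → Multiset D) (β : D) (b : Multiset D), p.1 = ρ₁ + ρ₂ ∧
      (ρ₁, β) ∈ interp e star L ∧ (ρ₂, b) ∈ interpBag e star P ∧ p.2 = β ::ₘ b}
/-- Relational interpretation of tests. -/
def interpTest (e : D ≃ Multiset D × D) (star : D) : List Tm → Set (ℕ → Multiset D)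
  | [] => {ρ | ρ = 0}
  | L :: V => {ρ | ∃ ρ₁ ρ₂ : ℕ → Multiset D, ρ = ρ₁ + ρ₂ ∧
      (ρ₁, star) ∈ interp e star L ∧ ρ₂ ∈ interpTest e star V}
end

/-- The `i`-th multiset component of an element of `D ≅ Multiset D × D`. -/
def seqD (e : D ≃ Multiset D × D) : ℕ → D → Multiset D
  | 0, α => (e α).1
  | i + 1, α => seqD e i (e α).2

/-- The element `a₁ :: ⋯ :: a_r :: *` of `D` determined by a finite list of multisets. -/
def buildD (e : D ≃ Multiset D × D) (star : D) (as : List (Multiset D)) : D :=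
  as.foldr (fun a β => e.symm (a, β)) star

/-- Parallel composition of a list of tests. -/
def parallel (ts : List (List Tm)) : List Tm := ts.foldr (· ++ ·) []

/-- `λx₁…x_r.body`. -/
def lamMany (r : ℕ) (body : Tm) : Tm := (List.range r).foldr Tm.lam body

/-- The term `α⁺ = λx₁…x_r.τ̄(∥ᵢ∥ⱼ (α_{i,j})⁻[xᵢ])` prescribed for
`α = a₁ :: ⋯ :: a_r :: *`, in terms of the test-context map `mt` (`mt β M` is the
test `β⁻[M]`). -/
noncomputable def plusSpec (mt : D → Tm → List Tm) (as : List (Multiset D)) : Tm :=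
  lamMany as.length (Tm.taubar (parallel ((List.range as.length).map
    (fun i => parallel ((as.getD i 0).toList.map (fun β => mt β (Tm.var i)))))))

/-- The test `α⁻[M] = τ[M [α_{1,1}⁺,…] ⋯ [α_{r,1}⁺,…]]` prescribed for
`α = a₁ :: ⋯ :: a_r :: *`, in terms of the term map `p` (`p β` is `β⁺`). -/
noncomputable def minusSpec (p : D → Tm) (as : List (Multiset D)) (M : Tm) : List Tm :=
  [(as.map (fun a => (a.map p).toList)).foldl Tm.app M]


/-- The environment sending `x` to `a` and every other variable to `0`. -/
def sEnv (x : ℕ) (a : Multiset D) : ℕ → Multiset D := fun z => if z = x then a else 0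

lemma sEnv_self (x : ℕ) (a : Multiset D) : sEnv x a x = a := if_pos rfl

lemma sEnv_other {x z : ℕ} (h : z ≠ x) (a : Multiset D) : sEnv x a z = 0 := if_neg h

lemma sEnv_set (x : ℕ) (m : Multiset D) :
    {ρ : ℕ → Multiset D | ρ x = m ∧ ∀ z, z ≠ x → ρ z = 0} = {sEnv x m} := by
  ext ρ
  constructor
  · rintro ⟨h1, h2⟩
    funext z
    by_cases hz : z = x
    · subst hz; rw [sEnv_self, h1]
    · rw [sEnv_other hz, h2 z hz]
  · rintro rfl
    exact ⟨sEnv_self x m, fun z hz => sEnv_other hz m⟩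

lemma sum_sEnv_singletons (i : ℕ) : ∀ l : List D,
    (l.map (fun β => sEnv i ({β} : Multiset D))).sum = sEnv i (↑l : Multiset D) := by
  intro l
  induction l with
  | nil => funext z; by_cases hz : z = i <;> simp [sEnv, hz]
  | cons β l ih =>
    simp only [List.map_cons, List.sum_cons, ih]
    funext z
    by_cases hz : z = i <;> simp [sEnv, hz]

/-- `envOf k [a₀, …, a_{r-1}]` is the environment sending `k+i` to `aᵢ`. -/
def envOf : ℕ → List (Multiset D) → (ℕ → Multiset D)
  | _, [] => 0
  | k, a :: as => sEnv k a + envOf (k+1) as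

lemma envOf_eq_sum : ∀ (as : List (Multiset D)) (k : ℕ),
    ((List.range' k as.length).map (fun i => sEnv i (as.getD (i - k) 0))).sum = envOf k as := by
  intro as
  induction as with
  | nil => intro k; simp [envOf]
  | cons a as ih =>
    intro k
    rw [List.length_cons, List.range'_succ, List.map_cons, List.sum_cons]
    have h1 : (a :: as).getD (k - k) 0 = a := by simp
    have h2 : ((List.range' (k+1) as.length).map (fun i => sEnv i ((a :: as).getD (i - k) 0)))
        = (List.range' (k+1) as.length).map (fun i => sEnv i (as.getD (i - (k+1)) 0)) := by
      apply List.map_congr_left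
      intro i hi
      have hik : k + 1 ≤ i := (List.mem_range'_1.1 hi).1
      have : i - k = (i - (k+1)) + 1 := by omega
      rw [this, List.getD_cons_succ]
    rw [h1, h2, ih (k+1)]
    rfl

lemma envOf_zero_eq (as : List (Multiset D)) :
    ((List.range as.length).map (fun i => sEnv i (as.getD i 0))).sum = envOf 0 as := by
  rw [List.range_eq_range']
  simpa using envOf_eq_sum as 0

variable (e : D ≃ Multiset D × D) (star : D)

lemma interpTest_append : ∀ (V W : List Tm) (ρ : ℕ → Multiset D),
    ρ ∈ interpTest e star (V ++ W) ↔
      ∃ ρ₁ ρ₂, ρ = ρ₁ + ρ₂ ∧ ρ₁ ∈ interpTest e star V ∧ ρ₂ ∈ interpTest e star W := by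
  intro V W
  induction V with
  | nil =>
    intro ρ
    simp only [List.nil_append]
    constructor
    · intro h; exact ⟨0, ρ, (zero_add ρ).symm, by rw [interpTest]; rfl, h⟩
    · rintro ⟨ρ₁, ρ₂, rfl, h1, h2⟩
      rw [interpTest] at h1
      simp only [Set.mem_setOf_eq] at h1
      rw [h1, zero_add]; exact h2
  | cons L V ih =>
    intro ρ
    rw [List.cons_append, interpTest, interpTest]
    simp only [Set.mem_setOf_eq]
    constructor
    · rintro ⟨ρ₁, ρ₂, rfl, h1, h2⟩
      obtain ⟨ρ₃, ρ₄, rfl, h3, h4⟩ := (ih ρ₂).1 h2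
      exact ⟨ρ₁ + ρ₃, ρ₄, (add_assoc ρ₁ ρ₃ ρ₄).symm, ⟨ρ₁, ρ₃, rfl, h1, h3⟩, h4⟩
    · rintro ⟨ρ₁, ρ₂, rfl, ⟨ρ₃, ρ₄, rfl, h3, h4⟩, h2⟩
      exact ⟨ρ₃, ρ₄ + ρ₂, (add_assoc ρ₃ ρ₄ ρ₂), h3, (ih (ρ₄ + ρ₂)).2 ⟨ρ₄, ρ₂, rfl, h4, h2⟩⟩

lemma interpTest_parallel {ι : Type*} : ∀ (l : List ι) (t : ι → List Tm) (g : ι → ℕ → Multiset D),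
    (∀ j ∈ l, interpTest e star (t j) = {g j}) →
    interpTest e star (parallel (l.map t)) = {(l.map g).sum} := by
  intro l t g
  induction l with
  | nil =>
    intro _
    ext ρ
    rw [show parallel ([].map t) = [] from rfl, interpTest]
    simp
  | cons j l ih =>
    intro h
    have hpar : parallel ((j :: l).map t) = t j ++ parallel (l.map t) := rfl
    ext ρ
    rw [hpar]
    rw [Set.mem_singleton_iff]
    constructor
    · intro hρ
      obtain ⟨ρ₁, ρ₂, rfl, h1, h2⟩ := (interpTest_append e star _ _ ρ).1 hρ
      rw [h j List.mem_cons_self, Set.mem_singleton_iff] at h1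
      rw [ih (fun i hi => h i (List.mem_cons_of_mem j hi)), Set.mem_singleton_iff] at h2
      rw [h1, h2]; rfl
    · rintro rfl
      refine (interpTest_append e star _ _ _).2 ⟨g j, (l.map g).sum, rfl, ?_, ?_⟩
      · rw [h j List.mem_cons_self]; rfl
      · rw [ih (fun i hi => h i (List.mem_cons_of_mem j hi))]; rfl

lemma interpBag_perm : ∀ {l₁ l₂ : List Tm}, l₁.Perm l₂ →
    interpBag e star l₁ = interpBag e star l₂ := by
  intro l₁ l₂ h
  induction h with
  | nil => rfl
  | cons M _ ih => rw [interpBag, interpBag, ih]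
  | swap M N l =>
    ext q
    rw [interpBag, interpBag, interpBag, interpBag]
    simp only [Set.mem_setOf_eq]
    constructor
    · rintro ⟨ρ₁, ρ₂, β, b, hq1, h1, ⟨ρ₃, ρ₄, γ, c, rfl, h3, h4, rfl⟩, hq2⟩
      exact ⟨ρ₃, ρ₁ + ρ₄, γ, β ::ₘ c, by rw [hq1, add_left_comm], h3,
        ⟨ρ₁, ρ₄, β, c, rfl, h1, h4, rfl⟩, by rw [hq2, Multiset.cons_swap]⟩
    · rintro ⟨ρ₁, ρ₂, β, b, hq1, h1, ⟨ρ₃, ρ₄, γ, c, rfl, h3, h4, rfl⟩, hq2⟩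
      exact ⟨ρ₃, ρ₁ + ρ₄, γ, β ::ₘ c, by rw [hq1, add_left_comm], h3,
        ⟨ρ₁, ρ₄, β, c, rfl, h1, h4, rfl⟩, by rw [hq2, Multiset.cons_swap]⟩
  | trans _ _ ih1 ih2 => rw [ih1, ih2]

lemma interpBag_points (p : D → Tm) : ∀ l : List D,
    (∀ β ∈ l, interp e star (p β) = {q : (ℕ → Multiset D) × D | q.1 = 0 ∧ q.2 = β}) →
    interpBag e star (l.map p) =
      {q : (ℕ → Multiset D) × Multiset D | q.1 = 0 ∧ q.2 = (↑l : Multiset D)} := by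
  intro l
  induction l with
  | nil => intro _; rw [List.map_nil, interpBag]; rfl
  | cons β l ih =>
    intro h
    ext q
    rw [List.map_cons, interpBag]
    simp only [Set.mem_setOf_eq]
    constructor
    · rintro ⟨ρ₁, ρ₂, γ, b, hq1, h1, h2, hq2⟩
      rw [h β List.mem_cons_self] at h1
      rw [ih (fun β' hβ' => h β' (List.mem_cons_of_mem β hβ'))] at h2
      obtain ⟨e1, e2⟩ := h1
      obtain ⟨e3, e4⟩ := h2
      simp only at e1 e2 e3 e4
      refine ⟨by rw [hq1, e1, e3, add_zero], ?_⟩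
      rw [hq2, e2, e4]
      exact (Multiset.cons_coe β l).symm
    · rintro ⟨hq1, hq2⟩
      refine ⟨0, 0, β, (↑l : Multiset D), by rw [hq1, add_zero], ?_, ?_, ?_⟩
      · rw [h β List.mem_cons_self]; exact ⟨rfl, rfl⟩
      · rw [ih (fun β' hβ' => h β' (List.mem_cons_of_mem β hβ'))]; exact ⟨rfl, rfl⟩
      · rw [hq2]; exact Multiset.cons_coe β l

lemma interpBag_points_m (p : D → Tm) (a : Multiset D)
    (h : ∀ β ∈ a, interp e star (p β) = {q : (ℕ → Multiset D) × D | q.1 = 0 ∧ q.2 = β}) :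
    interpBag e star ((a.map p).toList) =
      {q : (ℕ → Multiset D) × Multiset D | q.1 = 0 ∧ q.2 = a} := by
  have hperm : ((a.map p).toList).Perm (a.toList.map p) := by
    rw [← Multiset.coe_eq_coe, Multiset.coe_toList, ← Multiset.map_coe, Multiset.coe_toList]
  rw [interpBag_perm e star hperm,
    interpBag_points e star p a.toList (fun β hβ => h β (by rwa [← Multiset.mem_toList])),
    Multiset.coe_toList]

lemma seqD_star (hstar : e star = (0, star)) : ∀ i, seqD e i star = 0 := by
  intro i
  induction i with
  | zero => rw [seqD, hstar]
  | succ i ih => rw [seqD, hstar]; exact ih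

lemma seqD_buildD (hstar : e star = (0, star)) :
    ∀ (as : List (Multiset D)) (i : ℕ), seqD e i (buildD e star as) = as.getD i 0 := by
  intro as
  induction as with
  | nil => intro i; show seqD e i star = _; rw [seqD_star e star hstar]; simp
  | cons a as ih =>
    intro i
    cases i with
    | zero =>
      show (e (e.symm (a, buildD e star as))).1 = _
      rw [Equiv.apply_symm_apply]
      rfl
    | succ i =>
      show seqD e i (e (e.symm (a, buildD e star as))).2 = _
      rw [Equiv.apply_symm_apply]
      exact ih i

lemma claimC : ∀ (as : List (Multiset D)) (k : ℕ) (σ : ℕ → Multiset D) (T : List Tm),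
    (∀ j, k ≤ j → σ j = 0) →
    interpTest e star T = {σ + envOf k as} →
    interp e star ((List.range' k as.length).foldr Tm.lam (Tm.taubar T)) =
      {q : (ℕ → Multiset D) × D | q.1 = σ ∧ q.2 = buildD e star as} := by
  intro as
  induction as with
  | nil =>
    intro k σ T hσ hT
    ext q
    rw [show (List.range' k (List.length [])).foldr Tm.lam (Tm.taubar T) = Tm.taubar T from rfl,
      interp, hT]
    show q.2 = star ∧ q.1 ∈ _ ↔ _
    rw [Set.mem_singleton_iff]
    constructor
    · rintro ⟨h2, h1⟩
      exact ⟨by rw [h1]; exact add_zero σ, h2⟩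
    · rintro ⟨h1, h2⟩
      exact ⟨h2, by rw [h1]; exact (add_zero σ).symm⟩
  | cons a as ih =>
    intro k σ T hσ hT
    have hσ' : ∀ j, k + 1 ≤ j → (σ + sEnv k a) j = 0 := by
      intro j hj
      show σ j + sEnv k a j = 0
      rw [hσ j (by omega), sEnv_other (by omega) a, add_zero]
    have hT' : interpTest e star T = {(σ + sEnv k a) + envOf (k+1) as} := by
      rw [hT, show σ + envOf k (a :: as) = (σ + sEnv k a) + envOf (k+1) as from
        (add_assoc σ (sEnv k a) (envOf (k+1) as)).symm]
    have ih' := ih (k+1) (σ + sEnv k a) T hσ' hT'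
    ext q
    rw [show (List.range' k (a :: as).length).foldr Tm.lam (Tm.taubar T)
        = Tm.lam k ((List.range' (k+1) as.length).foldr Tm.lam (Tm.taubar T)) by
      rw [List.length_cons, List.range'_succ, List.foldr_cons], interp]
    simp only [Set.mem_setOf_eq]
    constructor
    · rintro ⟨b, α, hq2, hq1k, hmem⟩
      rw [ih'] at hmem
      obtain ⟨h1, h2⟩ := hmem
      simp only at h1 h2
      have hb : b = a := by
        have hk := congrFun h1 k
        rw [Function.update_self] at hk
        rw [hk]
        show σ k + sEnv k a k = a
        rw [hσ k le_rfl, sEnv_self, zero_add]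
      have hq1 : q.1 = σ := by
        funext z
        by_cases hz : z = k
        · rw [hz, hq1k, hσ k le_rfl]
        · have hk := congrFun h1 z
          rw [Function.update_of_ne hz] at hk
          rw [hk]
          show σ z + sEnv k a z = σ z
          rw [sEnv_other hz a, add_zero]
      exact ⟨hq1, by rw [hq2, hb, h2]; rfl⟩
    · rintro ⟨hq1, hq2⟩
      refine ⟨a, buildD e star as, by rw [hq2]; rfl, by rw [hq1]; exact hσ k le_rfl, ?_⟩
      rw [ih']
      refine ⟨?_, rfl⟩
      show Function.update q.1 k a = σ + sEnv k a
      funext z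
      by_cases hz : z = k
      · rw [hz, Function.update_self]
        show a = σ k + sEnv k a k
        rw [hσ k le_rfl, sEnv_self, zero_add]
      · rw [Function.update_of_ne hz]
        show q.1 z = σ z + sEnv k a z
        rw [sEnv_other hz a, add_zero, hq1]

lemma claimD : ∀ {Ps : List (List Tm)} {as : List (Multiset D)},
    List.Forall₂ (fun P a => interpBag e star P
      = {q : (ℕ → Multiset D) × Multiset D | q.1 = 0 ∧ q.2 = a}) Ps as →
    ∀ (M : Tm) (δ : D) (ρ : ℕ → Multiset D),
    ((ρ, δ) ∈ interp e star (Ps.foldl Tm.app M) ↔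
      (ρ, as.foldr (fun a γ => e.symm (a, γ)) δ) ∈ interp e star M) := by
  intro Ps as h
  induction h with
  | nil => intro M δ ρ; rfl
  | @cons P a Ps as hPa _ ih =>
    intro M δ ρ
    rw [List.foldl_cons, ih (Tm.app M P) δ ρ, List.foldr_cons, interp]
    simp only [Set.mem_setOf_eq]
    constructor
    · rintro ⟨ρ₁, ρ₂, b, hρ, h1, h2⟩
      rw [hPa] at h2
      obtain ⟨e1, e2⟩ := h2
      simp only at e1 e2 hρ
      rw [show ρ = ρ₁ by rw [hρ, e1, add_zero], ← e2]
      exact h1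
    · intro hmem
      refine ⟨ρ, 0, a, (add_zero ρ).symm, hmem, ?_⟩
      rw [hPa]; exact ⟨rfl, rfl⟩

lemma claimC0 (as : List (Multiset D)) (T : List Tm)
    (hT : interpTest e star T = {envOf 0 as}) :
    interp e star ((List.range as.length).foldr Tm.lam (Tm.taubar T)) =
      {q : (ℕ → Multiset D) × D | q.1 = 0 ∧ q.2 = buildD e star as} := by
  rw [List.range_eq_range']
  exact claimC e star as 0 0 T (fun j _ => rfl)
    (by rw [hT]; congr 1; rw [zero_add])

/-- Definability: for every `α` in the relational model `D`, the interpretation of the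
closed term `α⁺` is exactly `{α}`, and the interpretation of the test `α⁻[x]` (one free
variable `x`) is exactly `{[α]}` (the environment assigning `[α]` to `x` and `[]`
elsewhere). Here `p` and `mt` are the maps `α ↦ α⁺` and `α ↦ α⁻[·]` defined by mutual
recursion on the rank (well-founded by `hwf`), characterized by the equations `hp`,
`hmt` on canonical decompositions `α = a₁ :: ⋯ :: a_r :: *` (with `a_r ≠ []`). -/
theorem definability_of_points (e : D ≃ Multiset D × D) (star : D)
    (hstar : e star = (0, star))
    (hwf : WellFounded (fun β α : D => ∃ i : ℕ, β ∈ seqD e i α))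
    (hqf : ∀ α : D, ∃ as : List (Multiset D),
      (∀ h : as ≠ [], as.getLast h ≠ 0) ∧ α = buildD e star as)
    (p : D → Tm) (mt : D → Tm → List Tm)
    (hp : ∀ as : List (Multiset D), (∀ h : as ≠ [], as.getLast h ≠ 0) →
      p (buildD e star as) = plusSpec mt as)
    (hmt : ∀ as : List (Multiset D), (∀ h : as ≠ [], as.getLast h ≠ 0) →
      ∀ M : Tm, mt (buildD e star as) M = minusSpec p as M) :
    ∀ (α : D) (x : ℕ),
      interp e star (p α) = {q | q.1 = 0 ∧ q.2 = α} ∧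
      interpTest e star (mt α (Tm.var x)) =
        {ρ : ℕ → Multiset D | ρ x = {α} ∧ ∀ z : ℕ, z ≠ x → ρ z = 0} := by
  intro α
  induction α using hwf.induction with
  | _ α IH =>
  obtain ⟨as, hlast, hα⟩ := hqf α
  subst hα
  have hmemIH : ∀ β : D, (∃ i : ℕ, β ∈ as.getD i 0) → ∀ x : ℕ,
      interp e star (p β) = {q | q.1 = 0 ∧ q.2 = β} ∧
      interpTest e star (mt β (Tm.var x)) =
        {ρ : ℕ → Multiset D | ρ x = {β} ∧ ∀ z : ℕ, z ≠ x → ρ z = 0} := by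
    rintro β ⟨i, hi⟩
    exact IH β ⟨i, by rwa [seqD_buildD e star hstar]⟩
  intro x
  constructor
  · -- the positive part
    rw [hp as hlast]
    unfold plusSpec lamMany
    apply claimC0
    have hinner : ∀ i ∈ List.range as.length,
        interpTest e star (parallel ((as.getD i 0).toList.map (fun β => mt β (Tm.var i))))
          = {sEnv i (as.getD i 0)} := by
      intro i _
      rw [interpTest_parallel e star ((as.getD i 0).toList) (fun β => mt β (Tm.var i))
        (fun β => sEnv i ({β} : Multiset D))
        (fun β hβ => by rw [(hmemIH β ⟨i, Multiset.mem_toList.1 hβ⟩ i).2, sEnv_set]),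
        sum_sEnv_singletons, Multiset.coe_toList]
    rw [interpTest_parallel e star (List.range as.length) _
      (fun i => sEnv i (as.getD i 0)) hinner, envOf_zero_eq]
  · -- the negative part
    rw [hmt as hlast (Tm.var x)]
    unfold minusSpec
    rw [sEnv_set]
    have hf2 : List.Forall₂ (fun P a => interpBag e star P
        = {q : (ℕ → Multiset D) × Multiset D | q.1 = 0 ∧ q.2 = a})
        (as.map (fun a => (a.map p).toList)) as := by
      rw [List.forall₂_map_left_iff]
      refine List.forall₂_same.2 ?_
      intro a ha
      apply interpBag_points_m
      intro β hβ
      obtain ⟨i, hilt, hia⟩ := List.getElem_of_mem ha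
      have hgd : as.getD i 0 = a := by rw [List.getD_eq_getElem as 0 hilt, hia]
      exact (hmemIH β ⟨i, by rw [hgd]; exact hβ⟩ 0).1
    ext ρ
    rw [interpTest, Set.mem_singleton_iff]
    simp only [Set.mem_setOf_eq]
    constructor
    · rintro ⟨ρ₁, ρ₂, rfl, h1, h2⟩
      rw [interpTest] at h2
      replace h2 : ρ₂ = 0 := h2
      rw [claimD e star hf2 (Tm.var x) star ρ₁, interp] at h1
      simp only [Set.mem_setOf_eq] at h1
      obtain ⟨ha, hb⟩ := h1
      rw [h2, add_zero]
      funext z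
      by_cases hz : z = x
      · rw [hz, sEnv_self]; exact ha
      · rw [sEnv_other hz]; exact hb z hz
    · intro h
      refine ⟨ρ, 0, (add_zero ρ).symm, ?_, by rw [interpTest]; rfl⟩
      rw [claimD e star hf2 (Tm.var x) star ρ, interp]
      simp only [Set.mem_setOf_eq]
      exact ⟨by rw [h]; exact sEnv_self x _, fun z hz => by rw [h]; exact sEnv_other hz _⟩
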